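/- Define h : ℝ³ → ℝ³ by h(x, y, z) = (−|y| − |x + y| + z, −|x| − |x − y| + z, −|x + y| − |x| + z). Then h(−x, −y, z) = h(x, y, z) for all (x, y, z) ∈ ℝ³ (in particular h is not injective), and at every point p ∈ ℝ³ at which h is (Fréchet) differentiable, det(Dh(p)) = 2. -/

import Mathlib

/-- `Eu n` is the Euclidean space `ℝⁿ`. -/
noncomputable abbrev Eu (n : ℕ) := EuclideanSpace ℝ (Fin n)

/-- The point of `ℝ²` with coordinates `(x, y)`. -/
noncomputable def v2 (x y : ℝ) : Eu 2 := (WithLp.equiv 2 (Fin 2 → ℝ)).symm ![x, y]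

/-- The point of `ℝ³` with coordinates `(x, y, z)`. -/
noncomputable def v3 (x y z : ℝ) : Eu 3 := (WithLp.equiv 2 (Fin 3 → ℝ)).symm ![x, y, z]

lemma v3_apply_zero (x y z : ℝ) : (v3 x y z) 0 = x := rfl
lemma v3_apply_one (x y z : ℝ) : (v3 x y z) 1 = y := rfl
lemma v3_apply_two (x y z : ℝ) : (v3 x y z) 2 = z := rfl

/-- A sum of two absolute values, one centered at `0`, is not differentiable at `0`. -/
lemma key_not_diff (b z : ℝ) : ¬ DifferentiableAt ℝ (fun t : ℝ => -|t| - |b + t| + z) 0 := by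
  intro H
  by_cases hb : b = 0
  · subst hb
    have e : (fun t : ℝ => |t|) = fun t : ℝ => (-(-|t| - |0 + t| + z) + z) / 2 := by
      funext t; rw [zero_add]; ring
    have : DifferentiableAt ℝ (fun t : ℝ => |t|) 0 := by
      rw [e]; exact (H.neg.add_const z).div_const 2
    exact not_differentiableAt_abs_zero this
  · have hd : DifferentiableAt ℝ (fun t : ℝ => |b + t|) 0 := by
      have h1 : DifferentiableAt ℝ (fun w : ℝ => |w|) ((fun t : ℝ => b + t) 0) := by
        simpa using differentiableAt_abs hb
      exact h1.comp 0 (differentiableAt_id.const_add b)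
    have e : (fun t : ℝ => |t|) = fun t : ℝ => -(-|t| - |b + t| + z) - |b + t| + z := by
      funext t; ring
    have : DifferentiableAt ℝ (fun t : ℝ => |t|) 0 := by
      rw [e]; exact (H.neg.sub hd).add_const z
    exact not_differentiableAt_abs_zero this

lemma sign_exists (w : ℝ) (hw : w ≠ 0) : ∃ s : ℝ, (s = 1 ∨ s = -1) ∧ 0 < s * w := by
  rcases lt_or_gt_of_ne hw with h | h
  · exact ⟨-1, Or.inr rfl, by nlinarith⟩
  · exact ⟨1, Or.inl rfl, by nlinarith⟩

lemma abs_of_sign (s w : ℝ) (hs : s = 1 ∨ s = -1) (hw : 0 < s * w) : |w| = s * w := by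
  rcases hs with rfl | rfl
  · rw [one_mul] at *; exact abs_of_pos hw
  · have : w < 0 := by nlinarith
    rw [abs_of_neg this]; ring

/-- The map
`h(x, y, z) = (−|y| − |x + y| + z, −|x| − |x − y| + z, −|x + y| − |x| + z)`
satisfies `h(−x, −y, z) = h(x, y, z)` (so it is not injective), yet
`det Dh(p) = 2` at every point `p` of differentiability. -/
theorem tropical_laurent_space_counterexample
    (h : Eu 3 → Eu 3)
    (hh : ∀ x y z : ℝ, h (v3 x y z) =
      v3 (-|y| - |x + y| + z) (-|x| - |x - y| + z) (-|x + y| - |x| + z)) :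
    (∀ x y z : ℝ, h (v3 (-x) (-y) z) = h (v3 x y z)) ∧
    ¬ Function.Injective h ∧
    (∀ p : Eu 3, DifferentiableAt ℝ h p →
      LinearMap.det (fderiv ℝ h p).toLinearMap = 2) := by
  have hsymm : ∀ x y z : ℝ, h (v3 (-x) (-y) z) = h (v3 x y z) := by
    intro x y z
    rw [hh, hh]
    rw [show (-x + -y) = -(x + y) by ring, show (-x - -y) = -(x - y) by ring]
    simp only [abs_neg]
  refine ⟨hsymm, ?_, ?_⟩
  · intro hinj
    have h1 : h (v3 (-1) (-0) 0) = h (v3 1 0 0) := hsymm 1 0 0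
    rw [neg_zero] at h1
    have h2 := hinj h1
    have h3 := congrArg (fun q : Eu 3 => q 0) h2
    simp only [v3_apply_zero] at h3
    norm_num at h3
  · intro p hp
    obtain ⟨x, y, z, rfl⟩ : ∃ x y z : ℝ, p = v3 x y z := by
      refine ⟨p 0, p 1, p 2, ?_⟩
      apply PiLp.ext
      intro i
      fin_cases i <;> rfl
    -- directional differentiability
    have hcurve : ∀ (j : Fin 3) (a b c : ℝ),
        (∀ t : ℝ, v3 x y z + t • EuclideanSpace.single j (1 : ℝ) = v3 (a*t + x) (b*t + y) (c*t + z)) →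
        ∀ i : Fin 3, DifferentiableAt ℝ
          (fun t : ℝ => (h (v3 (a*t + x) (b*t + y) (c*t + z))) i) 0 := by
      intro j a b c hc i
      have hγ : DifferentiableAt ℝ (fun t : ℝ => v3 x y z + t • EuclideanSpace.single j (1 : ℝ)) 0 :=
        (differentiableAt_const _).add ((differentiableAt_id).smul_const _)
      have h1 : DifferentiableAt ℝ (fun t : ℝ => h (v3 x y z + t • EuclideanSpace.single j (1 : ℝ))) 0 := by
        apply DifferentiableAt.comp
        · simpa using hp
        · exact hγ
      have h2 : DifferentiableAt ℝ
          (fun t : ℝ => (EuclideanSpace.proj i : Eu 3 →L[ℝ] ℝ) (h (v3 x y z + t • EuclideanSpace.single j (1 : ℝ)))) 0 :=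
        ((EuclideanSpace.proj i : Eu 3 →L[ℝ] ℝ).differentiableAt).comp 0 h1
      have e : (fun t : ℝ => (h (v3 (a*t + x) (b*t + y) (c*t + z))) i) =
          fun t : ℝ => (EuclideanSpace.proj i : Eu 3 →L[ℝ] ℝ) (h (v3 x y z + t • EuclideanSpace.single j (1 : ℝ))) := by
        funext t
        rw [hc t]
        rfl
      rw [e]
      exact h2
    have hc1 : ∀ t : ℝ, v3 x y z + t • EuclideanSpace.single (1 : Fin 3) (1 : ℝ) =
        v3 (0*t + x) (1*t + y) (0*t + z) := by
      intro t
      apply PiLp.ext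
      intro i
      fin_cases i <;>
        simp [v3, PiLp.add_apply, PiLp.smul_apply, EuclideanSpace.single_apply] <;> ring
    have hc0 : ∀ t : ℝ, v3 x y z + t • EuclideanSpace.single (0 : Fin 3) (1 : ℝ) =
        v3 (1*t + x) (0*t + y) (0*t + z) := by
      intro t
      apply PiLp.ext
      intro i
      fin_cases i <;>
        simp [v3, PiLp.add_apply, PiLp.smul_apply, EuclideanSpace.single_apply] <;> ring
    have hdiff0 : DifferentiableAt ℝ (fun t : ℝ => -|1*t + y| - |x + (1*t + y)| + z) 0 := by
      have := hcurve 1 0 1 0 hc1 0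
      have e : (fun t : ℝ => (h (v3 (0*t + x) (1*t + y) (0*t + z))) 0) =
          fun t : ℝ => -|1*t + y| - |(0*t + x) + (1*t + y)| + (0*t + z) := by
        funext t; rw [hh, v3_apply_zero]
      rw [e] at this
      simpa using this
    have hdiff1 : DifferentiableAt ℝ (fun t : ℝ => -|1*t + x| - |(1*t + x) - y| + z) 0 := by
      have := hcurve 0 1 0 0 hc0 1
      have e : (fun t : ℝ => (h (v3 (1*t + x) (0*t + y) (0*t + z))) 1) =
          fun t : ℝ => -|1*t + x| - |(1*t + x) - (0*t + y)| + (0*t + z) := by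
        funext t; rw [hh, v3_apply_one]
      rw [e] at this
      simpa using this
    -- nonvanishing
    have hy : y ≠ 0 := by
      intro h0
      apply key_not_diff x z
      have e : (fun t : ℝ => -|t| - |x + t| + z) = fun t : ℝ => -|1*t + y| - |x + (1*t + y)| + z := by
        funext t; rw [h0]; ring_nf
      rw [e]; exact hdiff0
    have hxy : x + y ≠ 0 := by
      intro h0
      apply key_not_diff y z
      have e : (fun t : ℝ => -|t| - |y + t| + z) = fun t : ℝ => -|1*t + y| - |x + (1*t + y)| + z := by
        funext t
        rw [show x + (1*t + y) = (x + y) + t by ring, h0, zero_add, show (1:ℝ)*t + y = y + t by ring]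
        ring
      rw [e]; exact hdiff0
    have hx : x ≠ 0 := by
      intro h0
      apply key_not_diff (-y) z
      have e : (fun t : ℝ => -|t| - |(-y) + t| + z) = fun t : ℝ => -|1*t + x| - |(1*t + x) - y| + z := by
        funext t
        rw [h0, show (1:ℝ)*t + 0 = t by ring, show t - y = -y + t by ring]
      rw [e]; exact hdiff1
    have hxmy : x - y ≠ 0 := by
      intro h0
      apply key_not_diff x z
      have e : (fun t : ℝ => -|t| - |x + t| + z) = fun t : ℝ => -|1*t + x| - |(1*t + x) - y| + z := by
        funext t
        rw [show (1:ℝ)*t + x - y = (x - y) + t by ring, h0, zero_add,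
          show (1:ℝ)*t + x = x + t by ring]
        ring
      rw [e]; exact hdiff1
    -- signs
    obtain ⟨s, hs1, hsx⟩ := sign_exists x hx
    obtain ⟨t, ht1, hty⟩ := sign_exists y hy
    obtain ⟨u, hu1, hu⟩ := sign_exists (x + y) hxy
    obtain ⟨v, hv1, hv⟩ := sign_exists (x - y) hxmy
    set M : Matrix (Fin 3) (Fin 3) ℝ := !![-u, -t-u, 1; -s-v, v, 1; -u-s, -u, 1] with hM
    set L : Eu 3 →L[ℝ] Eu 3 := LinearMap.toContinuousLinearMap (Matrix.toEuclideanLin M) with hL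
    -- eventual equality
    have hcont : ∀ i : Fin 3, Continuous fun q : Eu 3 => q i := by
      intro i
      exact (EuclideanSpace.proj i : Eu 3 →L[ℝ] ℝ).continuous
    have he1 : ∀ᶠ q : Eu 3 in nhds (v3 x y z), 0 < s * q 0 := by
      have hc : Continuous fun q : Eu 3 => s * q 0 := continuous_const.mul (hcont 0)
      have := (hc.tendsto (v3 x y z)).eventually (eventually_gt_nhds (by rwa [v3_apply_zero]))
      exact this
    have he2 : ∀ᶠ q : Eu 3 in nhds (v3 x y z), 0 < t * q 1 := by
      have hc : Continuous fun q : Eu 3 => t * q 1 := continuous_const.mul (hcont 1)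
      exact (hc.tendsto (v3 x y z)).eventually (eventually_gt_nhds (by rwa [v3_apply_one]))
    have he3 : ∀ᶠ q : Eu 3 in nhds (v3 x y z), 0 < u * (q 0 + q 1) := by
      have hc : Continuous fun q : Eu 3 => u * (q 0 + q 1) :=
        continuous_const.mul ((hcont 0).add (hcont 1))
      exact (hc.tendsto (v3 x y z)).eventually (eventually_gt_nhds
        (by rw [v3_apply_zero, v3_apply_one]; exact hu))
    have he4 : ∀ᶠ q : Eu 3 in nhds (v3 x y z), 0 < v * (q 0 - q 1) := by
      have hc : Continuous fun q : Eu 3 => v * (q 0 - q 1) :=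
        continuous_const.mul ((hcont 0).sub (hcont 1))
      exact (hc.tendsto (v3 x y z)).eventually (eventually_gt_nhds
        (by rw [v3_apply_zero, v3_apply_one]; exact hv))
    have heq : h =ᶠ[nhds (v3 x y z)] fun q => L q := by
      filter_upwards [he1, he2, he3, he4] with q h1 h2 h3 h4
      have hq : q = v3 (q 0) (q 1) (q 2) := by
        apply PiLp.ext; intro i; fin_cases i <;> rfl
      have habs0 : |q 0| = s * q 0 := abs_of_sign s _ hs1 h1
      have habs1 : |q 1| = t * q 1 := abs_of_sign t _ ht1 h2
      have habs2 : |q 0 + q 1| = u * (q 0 + q 1) := abs_of_sign u _ hu1 h3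
      have habs3 : |q 0 - q 1| = v * (q 0 - q 1) := abs_of_sign v _ hv1 h4
      rw [hq, hh]
      rw [hL]
      rw [LinearMap.coe_toContinuousLinearMap']
      simp only [v3]
      rw [Matrix.toEuclideanLin_apply_piLp_toLp]
      refine congrArg _ ?_
      funext i
      fin_cases i <;>
        simp [hM, Matrix.mulVec, dotProduct, Fin.sum_univ_three, habs0, habs1, habs2, habs3] <;>
        ring
    have hfd : HasFDerivAt h L (v3 x y z) := by
      exact L.hasFDerivAt.congr_of_eventuallyEq heq
    rw [hfd.fderiv, hL, LinearMap.coe_toContinuousLinearMap,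
      Matrix.toEuclideanLin_eq_toLin, LinearMap.det_toLin, hM]
    rcases hs1 with rfl | rfl <;> rcases ht1 with rfl | rfl <;>
      rcases hu1 with rfl | rfl <;> rcases hv1 with rfl | rfl <;>
      norm_num [Matrix.det_fin_three, Matrix.vecHead, Matrix.vecTail, Matrix.cons_val_zero, Matrix.cons_val_one, Matrix.cons_val_two] <;> linarith
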